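/- Let s ≥ 1 be an integer and let v ∈ ℝ^d with ‖v‖ ≤ 1. Consider the multivariate polynomial g : ℝ^d → ℝ defined by g(x) = T_s(1 − ⟨v, x⟩), where T_s is the s-th Chebyshev polynomial of the first kind. Then ‖g‖² ≤ (47 s)^s. -/
import Mathlib


open Finset

/-- The coefficient norm `‖p‖ = sqrt (Σ_α c_α²)` of a multivariate polynomial. -/
noncomputable def mvNorm {d : ℕ} (p : MvPolynomial (Fin d) ℝ) : ℝ :=
  Real.sqrt (∑ α ∈ p.support, (MvPolynomial.coeff α p) ^ 2)

/-- The multivariate polynomial `x ↦ ⟨v, x⟩`. -/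
noncomputable def innerPoly {d : ℕ} (v : EuclideanSpace ℝ (Fin d)) :
    MvPolynomial (Fin d) ℝ :=
  ∑ i, MvPolynomial.C (v i) * MvPolynomial.X i

namespace StatementSixAux

/-! ### ℓ¹ bounds for the univariate polynomial `T_s(1 - y)` -/

/-- Truncated ℓ¹ coefficient norm of a univariate polynomial. -/
noncomputable def L (m : ℕ) (p : Polynomial ℝ) : ℝ :=
  ∑ k ∈ Finset.range m, |p.coeff k|

lemma L_nonneg (m : ℕ) (p : Polynomial ℝ) : 0 ≤ L m p :=
  Finset.sum_nonneg fun _ _ => abs_nonneg _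

lemma L_eq_of_natDegree_lt {p : Polynomial ℝ} {m m' : ℕ} (h : p.natDegree < m)
    (hm : m ≤ m') : L m' p = L m p := by
  refine (Finset.sum_subset (Finset.range_subset_range.2 hm) fun k _ hk => ?_).symm
  rw [Finset.mem_range, not_lt] at hk
  rw [Polynomial.coeff_eq_zero_of_natDegree_lt (lt_of_lt_of_le h hk), abs_zero]

lemma L_sub_le (m : ℕ) (p q : Polynomial ℝ) : L m (p - q) ≤ L m p + L m q := by
  rw [L, L, L, ← Finset.sum_add_distrib]
  exact Finset.sum_le_sum fun k _ => by
    rw [Polynomial.coeff_sub]; exact abs_sub _ _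

lemma L_C_mul (a : ℝ) (m : ℕ) (p : Polynomial ℝ) :
    L m (Polynomial.C a * p) = |a| * L m p := by
  simp [L, Polynomial.coeff_C_mul, abs_mul, Finset.mul_sum]

lemma L_X_mul (m : ℕ) (p : Polynomial ℝ) :
    L (m + 1) (Polynomial.X * p) = L m p := by
  rw [L, Finset.sum_range_succ']
  simp [Polynomial.coeff_X_mul, Polynomial.mul_coeff_zero, L]

/-- `chebQ n = T_n(1 - y)` as a univariate polynomial. -/
noncomputable def chebQ (n : ℕ) : Polynomial ℝ :=
  (Polynomial.Chebyshev.T ℝ (n : ℤ)).comp (1 - Polynomial.X)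

lemma chebQ_zero : chebQ 0 = 1 := by
  simp [chebQ, Polynomial.Chebyshev.T_zero]

lemma chebQ_one : chebQ 1 = 1 - Polynomial.X := by
  simp [chebQ, Polynomial.Chebyshev.T_one]

lemma chebQ_add_two (n : ℕ) :
    chebQ (n + 2) = 2 * (1 - Polynomial.X) * chebQ (n + 1) - chebQ n := by
  have h : ((n + 2 : ℕ) : ℤ) = (n : ℤ) + 2 := by push_cast; ring
  have h1 : ((n + 1 : ℕ) : ℤ) = (n : ℤ) + 1 := by push_cast; ring
  rw [chebQ, h, Polynomial.Chebyshev.T_add_two]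
  rw [Polynomial.sub_comp, Polynomial.mul_comp, Polynomial.mul_comp,
    Polynomial.ofNat_comp, Polynomial.X_comp]
  rw [chebQ, chebQ, h1]
  norm_num

lemma chebQ_bound : ∀ n : ℕ,
    ((chebQ n).natDegree ≤ n ∧ L (n + 1) (chebQ n) ≤ 5 ^ n) ∧
    ((chebQ (n + 1)).natDegree ≤ n + 1 ∧ L (n + 2) (chebQ (n + 1)) ≤ 5 ^ (n + 1)) := by
  intro n
  induction n with
  | zero =>
    refine ⟨⟨?_, ?_⟩, ?_, ?_⟩
    · simp [chebQ_zero]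
    · simp [L, chebQ_zero, Polynomial.coeff_one]
    · rw [chebQ_one]
      refine le_trans (Polynomial.natDegree_sub_le _ _) ?_
      simp
    · rw [chebQ_one, L]
      norm_num [Finset.sum_range_succ, Polynomial.coeff_sub, Polynomial.coeff_one,
        Polynomial.coeff_X]
  | succ n ih =>
    obtain ⟨⟨hdn, hLn⟩, hdn1, hLn1⟩ := ih
    have hdeg2 : (2 * (1 - Polynomial.X) : Polynomial ℝ).natDegree ≤ 1 := by
      refine le_trans Polynomial.natDegree_mul_le ?_
      have h2 : (2 : Polynomial ℝ).natDegree = 0 := Polynomial.natDegree_ofNat 2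
      have h3 : (1 - Polynomial.X : Polynomial ℝ).natDegree ≤ 1 := by
        refine le_trans (Polynomial.natDegree_sub_le _ _) ?_
        simp
      omega
    have hdQ : (chebQ (n + 2)).natDegree ≤ n + 2 := by
      rw [chebQ_add_two]
      refine le_trans (Polynomial.natDegree_sub_le _ _) ?_
      have h1 : (2 * (1 - Polynomial.X) * chebQ (n + 1)).natDegree ≤ n + 2 := by
        refine le_trans Polynomial.natDegree_mul_le ?_
        omega
      exact max_le h1 (by omega)
    refine ⟨⟨hdn1, hLn1⟩, hdQ, ?_⟩
    -- the ℓ¹ bound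
    have hC2 : (Polynomial.C (2:ℝ)) = (2 : Polynomial ℝ) := by
      rw [show (2:ℝ) = ((2:ℕ):ℝ) by norm_num, Polynomial.C_eq_natCast]; norm_num
    have hsplit : 2 * (1 - Polynomial.X) * chebQ (n + 1)
        = Polynomial.C (2:ℝ) * chebQ (n + 1)
          - Polynomial.C (2:ℝ) * (Polynomial.X * chebQ (n + 1)) := by
      rw [hC2]; ring
    have key : L (n + 3) (chebQ (n + 2)) ≤ 5 ^ (n + 2) := by
      rw [chebQ_add_two]
      refine le_trans (L_sub_le _ _ _) ?_
      have hA : L (n + 3) (2 * (1 - Polynomial.X) * chebQ (n + 1)) ≤ 4 * 5 ^ (n + 1) := by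
        rw [hsplit]
        refine le_trans (L_sub_le _ _ _) ?_
        have e1 : L (n + 3) (Polynomial.C (2:ℝ) * chebQ (n + 1)) = 2 * L (n + 3) (chebQ (n + 1)) := by
          rw [L_C_mul]; norm_num
        have e2 : L (n + 3) (Polynomial.C (2:ℝ) * (Polynomial.X * chebQ (n + 1)))
            = 2 * L (n + 2) (chebQ (n + 1)) := by
          rw [L_C_mul]
          have : (n + 3) = (n + 2) + 1 := rfl
          rw [this, L_X_mul]; norm_num
        have e3 : L (n + 3) (chebQ (n + 1)) = L (n + 2) (chebQ (n + 1)) :=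
          L_eq_of_natDegree_lt (by omega) (by omega)
        rw [e1, e2, e3]
        nlinarith [L_nonneg (n + 2) (chebQ (n + 1))]
      have hB : L (n + 3) (chebQ n) ≤ 5 ^ n := by
        rw [L_eq_of_natDegree_lt (p := chebQ n) (by omega) (by omega : n + 1 ≤ n + 3)]
        exact hLn
      have h5 : (4 : ℝ) * 5 ^ (n + 1) + 5 ^ n ≤ 5 ^ (n + 2) := by
        have : (0:ℝ) ≤ 5 ^ n := by positivity
        ring_nf
        nlinarith
      linarith
    simpa [show n + 1 + 2 = n + 3 from rfl, show n + 1 + 1 = n + 2 from rfl] using key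

/-! ### ℓ² facts for `mvNorm` -/

lemma sum_sq_eq_of_support_subset {d : ℕ} (p : MvPolynomial (Fin d) ℝ)
    {S : Finset ((Fin d) →₀ ℕ)} (h : p.support ⊆ S) :
    ∑ α ∈ p.support, (MvPolynomial.coeff α p) ^ 2
      = ∑ α ∈ S, (MvPolynomial.coeff α p) ^ 2 :=
  Finset.sum_subset h fun α _ hα => by
    rw [MvPolynomial.notMem_support_iff.1 hα]; ring

lemma mvNorm_nonneg {d : ℕ} (p : MvPolynomial (Fin d) ℝ) : 0 ≤ mvNorm p :=
  Real.sqrt_nonneg _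

lemma mvNorm_eq_of_support_subset {d : ℕ} (p : MvPolynomial (Fin d) ℝ)
    {S : Finset ((Fin d) →₀ ℕ)} (h : p.support ⊆ S) :
    mvNorm p = Real.sqrt (∑ α ∈ S, (MvPolynomial.coeff α p) ^ 2) := by
  rw [mvNorm, sum_sq_eq_of_support_subset p h]

lemma sqrt_sum_sq_add_le {ι : Type*} (S : Finset ι) (f g : ι → ℝ) :
    Real.sqrt (∑ i ∈ S, (f i + g i) ^ 2)
      ≤ Real.sqrt (∑ i ∈ S, f i ^ 2) + Real.sqrt (∑ i ∈ S, g i ^ 2) := by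
  set A := Real.sqrt (∑ i ∈ S, f i ^ 2) with hA
  set B := Real.sqrt (∑ i ∈ S, g i ^ 2) with hB
  set C := Real.sqrt (∑ i ∈ S, (f i + g i) ^ 2) with hC
  have hCnn : 0 ≤ C := Real.sqrt_nonneg _
  have hAnn : 0 ≤ A := Real.sqrt_nonneg _
  have hBnn : 0 ≤ B := Real.sqrt_nonneg _
  have hC2 : C ^ 2 = ∑ i ∈ S, (f i + g i) ^ 2 :=
    Real.sq_sqrt (Finset.sum_nonneg fun i _ => sq_nonneg _)
  have hsplit : C ^ 2 = (∑ i ∈ S, f i * (f i + g i)) + ∑ i ∈ S, g i * (f i + g i) := by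
    rw [hC2, ← Finset.sum_add_distrib]
    exact Finset.sum_congr rfl fun i _ => by ring
  have h1 : ∑ i ∈ S, f i * (f i + g i) ≤ A * C := by
    simpa [hA, hC] using Real.sum_mul_le_sqrt_mul_sqrt S f (fun i => f i + g i)
  have h2 : ∑ i ∈ S, g i * (f i + g i) ≤ B * C := by
    simpa [hB, hC] using Real.sum_mul_le_sqrt_mul_sqrt S g (fun i => f i + g i)
  have hkey : C ^ 2 ≤ (A + B) * C := by rw [hsplit]; nlinarith
  rcases eq_or_lt_of_le hCnn with h | h
  · rw [← h]; positivity
  · nlinarith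

lemma mvNorm_add_le {d : ℕ} (p q : MvPolynomial (Fin d) ℝ) :
    mvNorm (p + q) ≤ mvNorm p + mvNorm q := by
  classical
  set S := p.support ∪ q.support with hS
  have hsub : (p + q).support ⊆ S := MvPolynomial.support_add
  rw [mvNorm_eq_of_support_subset _ hsub,
    mvNorm_eq_of_support_subset p Finset.subset_union_left,
    mvNorm_eq_of_support_subset q Finset.subset_union_right]
  simpa [MvPolynomial.coeff_add] using
    sqrt_sum_sq_add_le S (fun α => MvPolynomial.coeff α p) (fun α => MvPolynomial.coeff α q)

lemma mvNorm_zero {d : ℕ} : mvNorm (0 : MvPolynomial (Fin d) ℝ) = 0 := by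
  simp [mvNorm]

lemma mvNorm_sum_le {d : ℕ} {ι : Type*} (s : Finset ι) (f : ι → MvPolynomial (Fin d) ℝ) :
    mvNorm (∑ i ∈ s, f i) ≤ ∑ i ∈ s, mvNorm (f i) := by
  classical
  induction s using Finset.cons_induction with
  | empty => simp [mvNorm_zero]
  | cons a s ha ih =>
    rw [Finset.sum_cons, Finset.sum_cons]
    exact le_trans (mvNorm_add_le _ _) (by linarith)

lemma mvNorm_smul_le {d : ℕ} (a : ℝ) (p : MvPolynomial (Fin d) ℝ) :
    mvNorm (a • p) ≤ |a| * mvNorm p := by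
  rw [mvNorm_eq_of_support_subset (a • p) MvPolynomial.support_smul, mvNorm]
  have : ∑ α ∈ p.support, (MvPolynomial.coeff α (a • p)) ^ 2
      = a ^ 2 * ∑ α ∈ p.support, (MvPolynomial.coeff α p) ^ 2 := by
    rw [Finset.mul_sum]
    exact Finset.sum_congr rfl fun α _ => by
      rw [MvPolynomial.coeff_smul, smul_eq_mul]; ring
  rw [this, Real.sqrt_mul (sq_nonneg a), Real.sqrt_sq_eq_abs]

/-! ### The norm of powers of `innerPoly` -/

lemma sum_sq_sum_monomial_le {d : ℕ} {ι : Type*} [DecidableEq ι] (s : Finset ι)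
    (m : ι → ((Fin d) →₀ ℕ)) (hm : Set.InjOn m s) (c : ι → ℝ) :
    ∑ α ∈ (∑ i ∈ s, MvPolynomial.monomial (m i) (c i)).support,
        (MvPolynomial.coeff α (∑ i ∈ s, MvPolynomial.monomial (m i) (c i))) ^ 2
      ≤ ∑ i ∈ s, (c i) ^ 2 := by
  classical
  set p := ∑ i ∈ s, MvPolynomial.monomial (m i) (c i) with hp
  have hsub : p.support ⊆ s.image m := by
    refine le_trans MvPolynomial.support_sum ?_
    refine Finset.biUnion_subset.2 fun i hi => ?_
    rw [MvPolynomial.support_monomial]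
    split
    · simp
    · simpa using Finset.mem_image_of_mem m hi
  rw [sum_sq_eq_of_support_subset p hsub, Finset.sum_image (fun x hx y hy h => hm hx hy h)]
  refine le_of_eq (Finset.sum_congr rfl fun i hi => ?_)
  have : MvPolynomial.coeff (m i) p = c i := by
    rw [hp, MvPolynomial.coeff_sum]
    rw [Finset.sum_eq_single_of_mem i hi]
    · simp [MvPolynomial.coeff_monomial]
    · intro j hj hji
      rw [MvPolynomial.coeff_monomial, if_neg]
      exact fun h => hji (hm hj hi h)
  rw [this]

lemma innerPoly_pow_rep {d : ℕ} (v : EuclideanSpace ℝ (Fin d)) (k : ℕ) :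
    innerPoly v ^ k
      = ∑ μ ∈ Finset.piAntidiag (Finset.univ : Finset (Fin d)) k,
          MvPolynomial.monomial (Finsupp.equivFunOnFinite.symm μ)
            ((Nat.multinomial Finset.univ μ : ℝ) * ∏ i, v i ^ μ i) := by
  classical
  rw [innerPoly, Finset.sum_pow_eq_sum_piAntidiag]
  refine Finset.sum_congr rfl fun μ hμ => ?_
  rw [MvPolynomial.monomial_eq]
  have hprod : (Finsupp.equivFunOnFinite.symm μ).prod
      (fun n e => (MvPolynomial.X n : MvPolynomial (Fin d) ℝ) ^ e)
      = ∏ i, (MvPolynomial.X i : MvPolynomial (Fin d) ℝ) ^ μ i := by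
    rw [Finsupp.prod_fintype]
    · simp
    · intro i; exact pow_zero _
  have hterm : ∏ i, (MvPolynomial.C (v i) * MvPolynomial.X i) ^ μ i
      = MvPolynomial.C (∏ i, v i ^ μ i)
          * ∏ i, (MvPolynomial.X i : MvPolynomial (Fin d) ℝ) ^ μ i := by
    rw [map_prod, ← Finset.prod_mul_distrib]
    refine Finset.prod_congr rfl fun i _ => ?_
    rw [mul_pow, map_pow]
  rw [hterm, hprod, ← MvPolynomial.C_eq_coe_nat, ← mul_assoc, ← MvPolynomial.C_mul]

lemma sum_sq_innerPoly_pow_le {d : ℕ} (v : EuclideanSpace ℝ (Fin d)) (k : ℕ) :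
    ∑ α ∈ (innerPoly v ^ k).support, (MvPolynomial.coeff α (innerPoly v ^ k)) ^ 2
      ≤ (Nat.factorial k : ℝ) * (∑ i, v i ^ 2) ^ k := by
  classical
  rw [innerPoly_pow_rep]
  refine le_trans
    (sum_sq_sum_monomial_le _ _ (fun x _ y _ h => Finsupp.equivFunOnFinite.symm.injective h) _)
    ?_
  rw [Finset.sum_pow_eq_sum_piAntidiag (Finset.univ : Finset (Fin d)) (fun i => v i ^ 2) k,
    Finset.mul_sum]
  refine Finset.sum_le_sum fun μ hμ => ?_
  have hsum : ∑ i, μ i = k := ((Finset.mem_piAntidiag).1 hμ).1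
  have hmle : (Nat.multinomial Finset.univ μ : ℝ) ≤ (Nat.factorial k : ℝ) := by
    have hdvd : Nat.multinomial Finset.univ μ ∣ Nat.factorial k := by
      refine ⟨∏ i, Nat.factorial (μ i), ?_⟩
      rw [← hsum, ← Nat.multinomial_spec, mul_comm]
    exact_mod_cast Nat.le_of_dvd (Nat.factorial_pos k) hdvd
  have hppos : (0:ℝ) ≤ ∏ i, (v i ^ 2) ^ μ i :=
    Finset.prod_nonneg fun i _ => pow_nonneg (sq_nonneg _) _
  have hmnn : (0:ℝ) ≤ (Nat.multinomial Finset.univ μ : ℝ) := Nat.cast_nonneg _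
  have hprodsq : (∏ i, v i ^ μ i) ^ 2 = ∏ i, (v i ^ 2) ^ μ i := by
    rw [← Finset.prod_pow]
    exact Finset.prod_congr rfl fun i _ => pow_right_comm _ _ _
  have : ((Nat.multinomial Finset.univ μ : ℝ) * ∏ i, v i ^ μ i) ^ 2
      = (Nat.multinomial Finset.univ μ : ℝ) ^ 2 * ∏ i, (v i ^ 2) ^ μ i := by
    rw [mul_pow, hprodsq]
  rw [this]
  calc (Nat.multinomial Finset.univ μ : ℝ) ^ 2 * ∏ i, (v i ^ 2) ^ μ i
      ≤ (Nat.factorial k : ℝ) * (Nat.multinomial Finset.univ μ : ℝ) * ∏ i, (v i ^ 2) ^ μ i := by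
        refine mul_le_mul_of_nonneg_right ?_ hppos
        nlinarith
    _ = (Nat.factorial k : ℝ) * ((Nat.multinomial Finset.univ μ : ℝ) * ∏ i, (v i ^ 2) ^ μ i) := by ring

end StatementSixAux

/-- For `s ≥ 1` and `‖v‖ ≤ 1`, the multivariate polynomial
`g(x) = T_s(1 − ⟨v, x⟩)` satisfies `‖g‖² ≤ (47 s)^s`. -/
theorem mvNorm_sq_chebyshev_comp_inner_le {d s : ℕ} (hs : 1 ≤ s)
    (v : EuclideanSpace ℝ (Fin d)) (hv : ‖v‖ ≤ 1) :
    (mvNorm (Polynomial.aeval (1 - innerPoly v)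
        (Polynomial.Chebyshev.T ℝ (s : ℤ)))) ^ 2
      ≤ (47 * (s : ℝ)) ^ s := by
  classical
  open StatementSixAux in
  set w := innerPoly v with hw
  have hveq : Polynomial.aeval (1 - w) (Polynomial.Chebyshev.T ℝ (s : ℤ))
      = Polynomial.aeval w (StatementSixAux.chebQ s) := by
    rw [StatementSixAux.chebQ, Polynomial.aeval_comp]
    congr 1
    rw [map_sub, Polynomial.aeval_one, Polynomial.aeval_X]
  obtain ⟨⟨hdeg, hL⟩, -⟩ := StatementSixAux.chebQ_bound s
  have hexp := Polynomial.aeval_eq_sum_range' (p := StatementSixAux.chebQ s) (n := s + 1)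
      (lt_of_le_of_lt hdeg (Nat.lt_succ_self s)) w
  have hv2 : ∑ i, v i ^ 2 ≤ 1 := by
    have hnorm : ‖v‖ ^ 2 = ∑ i, v i ^ 2 := by
      rw [EuclideanSpace.norm_eq, Real.sq_sqrt (Finset.sum_nonneg fun i _ => sq_nonneg _)]
      exact Finset.sum_congr rfl fun i _ => by rw [Real.norm_eq_abs, sq_abs]
    nlinarith [norm_nonneg v]
  have hwk : ∀ k, k ≤ s → mvNorm (w ^ k) ≤ Real.sqrt (Nat.factorial s : ℝ) := by
    intro k hk
    rw [mvNorm]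
    refine Real.sqrt_le_sqrt ?_
    refine le_trans (sum_sq_innerPoly_pow_le v k) ?_
    have h2 : (∑ i, v i ^ 2) ^ k ≤ 1 :=
      pow_le_one₀ (Finset.sum_nonneg fun i _ => sq_nonneg _) hv2
    have h2' : (0:ℝ) ≤ (∑ i, v i ^ 2) ^ k :=
      pow_nonneg (Finset.sum_nonneg fun i _ => sq_nonneg _) _
    have h3 : (Nat.factorial k : ℝ) ≤ (Nat.factorial s : ℝ) := by
      exact_mod_cast Nat.factorial_le hk
    have h4 : (0:ℝ) ≤ (Nat.factorial k : ℝ) := Nat.cast_nonneg _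
    nlinarith
  have hstep : mvNorm (Polynomial.aeval w (StatementSixAux.chebQ s))
      ≤ Real.sqrt (Nat.factorial s : ℝ) * 5 ^ s := by
    rw [hexp]
    refine le_trans (mvNorm_sum_le _ _) ?_
    have hterm : ∀ k ∈ Finset.range (s + 1),
        mvNorm ((StatementSixAux.chebQ s).coeff k • w ^ k)
          ≤ |(StatementSixAux.chebQ s).coeff k| * Real.sqrt (Nat.factorial s : ℝ) := by
      intro k hk
      refine le_trans (mvNorm_smul_le _ _) ?_
      exact mul_le_mul_of_nonneg_left (hwk k (by
        have := Finset.mem_range.1 hk; omega)) (abs_nonneg _)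
    refine le_trans (Finset.sum_le_sum hterm) ?_
    rw [← Finset.sum_mul]
    have hLdef : ∑ k ∈ Finset.range (s + 1), |(StatementSixAux.chebQ s).coeff k|
        = StatementSixAux.L (s + 1) (StatementSixAux.chebQ s) := rfl
    rw [hLdef, mul_comm]
    exact mul_le_mul_of_nonneg_left hL (Real.sqrt_nonneg _)
  rw [hveq]
  have hnn := mvNorm_nonneg (Polynomial.aeval w (StatementSixAux.chebQ s))
  have hsq : mvNorm (Polynomial.aeval w (StatementSixAux.chebQ s)) ^ 2
      ≤ (Real.sqrt (Nat.factorial s : ℝ) * 5 ^ s) ^ 2 :=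
    pow_le_pow_left₀ hnn hstep 2
  refine le_trans hsq ?_
  rw [mul_pow, Real.sq_sqrt (by positivity)]
  have h1 : (Nat.factorial s : ℝ) ≤ (s : ℝ) ^ s := by
    exact_mod_cast Nat.factorial_le_pow s
  have h2 : ((5:ℝ) ^ s) ^ 2 = 25 ^ s := by
    rw [← pow_mul, mul_comm s 2, pow_mul]; norm_num
  have hsnn : (0:ℝ) ≤ (s : ℝ) := Nat.cast_nonneg s
  calc (Nat.factorial s : ℝ) * ((5:ℝ) ^ s) ^ 2
      ≤ (s : ℝ) ^ s * 25 ^ s := by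
        rw [h2]
        exact mul_le_mul_of_nonneg_right h1 (by positivity)
    _ = (25 * (s : ℝ)) ^ s := by rw [mul_pow, mul_comm]
    _ ≤ (47 * (s : ℝ)) ^ s := by
        refine pow_le_pow_left₀ (by positivity) (by nlinarith) s
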